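/- With the hard-concrete gate m(u) = min(1, max(0, s(u)·(ζ − γ) + γ)) where s(u) = sigmoid((log(u/(1−u)) + α)/β), u uniform on (0,1), β > 0, γ < 0 < 1 < ζ, the probability that the gate is nonzero equals P(m(u) > 0) = sigmoid(α − β·log(−γ/ζ)). -/

import Mathlib

noncomputable def sigmoid (x : ℝ) : ℝ := 1 / (1 + Real.exp (-x))

theorem stmt_9 (α β γ ζ : ℝ) (hβ : 0 < β) (hγ : γ < 0) (hζ : 1 < ζ) :
    MeasureTheory.volume
        {u : ℝ | u ∈ Set.Ioo (0 : ℝ) 1 ∧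
          0 < min 1 (max 0 (sigmoid ((Real.log (u / (1 - u)) + α) / β) * (ζ - γ) + γ))}
      = ENNReal.ofReal (sigmoid (α - β * Real.log (-γ / ζ))) := by
  have hnegγ : (0:ℝ) < -γ := by linarith
  have hratio : (0:ℝ) < ζ / (-γ) := by positivity
  set L : ℝ := β * Real.log (-γ / ζ) - α with hL
  set k : ℝ := Real.exp L with hk
  have hkpos : 0 < k := Real.exp_pos L
  have h1k : 0 < 1 + k := by linarith
  set a : ℝ := k / (1 + k) with ha
  have hapos : 0 < a := by positivity
  have ha1 : a < 1 := by rw [ha, div_lt_one h1k]; linarith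
  have hlogflip : Real.log (ζ / (-γ)) = - Real.log (-γ / ζ) := by
    rw [show ζ / (-γ) = (-γ / ζ)⁻¹ by rw [inv_div], Real.log_inv]
  -- key pointwise equivalence
  have key : ∀ u : ℝ, 0 < u → u < 1 →
      (0 < sigmoid ((Real.log (u / (1 - u)) + α) / β) * (ζ - γ) + γ ↔ a < u) := by
    intro u hu0 hu1
    have h1u : 0 < 1 - u := by linarith
    have hquot : 0 < u / (1 - u) := by positivity
    set t : ℝ := (Real.log (u / (1 - u)) + α) / β with ht
    set E : ℝ := Real.exp (-t) with hE
    have hEpos : 0 < E := Real.exp_pos _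
    have h1E : 0 < 1 + E := by linarith
    have step1 : (0 < sigmoid t * (ζ - γ) + γ) ↔ E < ζ / (-γ) := by
      have heq : sigmoid t * (ζ - γ) + γ = (ζ + γ * E) / (1 + E) := by
        rw [sigmoid, ← hE]; field_simp; ring
      rw [heq, lt_div_iff₀ h1E, zero_mul, lt_div_iff₀ hnegγ]
      constructor <;> intro h <;> nlinarith
    have step2 : E < ζ / (-γ) ↔ Real.log (-γ / ζ) < t := by
      rw [hE, ← Real.lt_log_iff_exp_lt hratio, hlogflip, neg_lt_neg_iff]
    have step3 : Real.log (-γ / ζ) < t ↔ L < Real.log (u / (1 - u)) := by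
      rw [ht, lt_div_iff₀ hβ, hL]
      constructor <;> intro h <;> nlinarith
    have step4 : L < Real.log (u / (1 - u)) ↔ a < u := by
      rw [Real.lt_log_iff_exp_lt hquot, ← hk, lt_div_iff₀ h1u, ha, div_lt_iff₀ h1k]
      constructor <;> intro h <;> nlinarith
    rw [step1, step2, step3, step4]
  have hset : {u : ℝ | u ∈ Set.Ioo (0 : ℝ) 1 ∧
        0 < min 1 (max 0 (sigmoid ((Real.log (u / (1 - u)) + α) / β) * (ζ - γ) + γ))}
      = Set.Ioo a 1 := by
    ext u
    simp only [Set.mem_setOf_eq, Set.mem_Ioo, lt_min_iff, lt_max_iff]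
    constructor
    · rintro ⟨⟨hu0, hu1⟩, -, h⟩
      rcases h with h | h
      · exact absurd h (lt_irrefl 0)
      · exact ⟨(key u hu0 hu1).mp h, hu1⟩
    · rintro ⟨hau, hu1⟩
      have hu0 : 0 < u := lt_trans hapos hau
      exact ⟨⟨hu0, hu1⟩, one_pos, Or.inr ((key u hu0 hu1).mpr hau)⟩
  rw [hset, Real.volume_Ioo]
  congr 1
  rw [sigmoid, show -(α - β * Real.log (-γ / ζ)) = L by rw [hL]; ring, ← hk, ha]
  field_simp
  ring
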